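/- If a real derivation d : ℝ → ℝ is Lebesgue measurable, then d is identically zero. -/

import Mathlib

open MeasureTheory Set Pointwise

theorem stmt_16 (d : ℝ → ℝ)
    (hadd : ∀ x y : ℝ, d (x + y) = d x + d y)
    (hmul : ∀ x y : ℝ, d (x * y) = x * d y + y * d x)
    (hmeas : Measurable d) :
    ∀ x : ℝ, d x = 0 := by
  let f : ℝ →+ ℝ := AddMonoidHom.mk' d hadd
  have hf : ∀ x, f x = d x := fun x => rfl
  have d1 : d 1 = 0 := by have := hmul 1 1; simp at this; linarith
  -- natural scaling
  have hnat : ∀ (m : ℕ) (x : ℝ), d ((m : ℝ) * x) = m * d x := by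
    intro m x
    have := map_nsmul f m x
    simpa [hf, nsmul_eq_mul] using this
  -- find n with positive measure of E n
  set E : ℕ → Set ℝ := fun n => {x | |d x| ≤ n} with hE
  have hEmeas : ∀ n, MeasurableSet (E n) := fun n =>
    measurableSet_le (hmeas.abs) measurable_const
  have hcover : (⋃ n, E n) = univ := by
    ext x; simp only [mem_iUnion, mem_univ, iff_true]
    obtain ⟨n, hn⟩ := exists_nat_ge (|d x|)
    exact ⟨n, hn⟩
  obtain ⟨n, hn⟩ : ∃ n, 0 < volume (E n) := by
    by_contra h
    push_neg at h
    have : volume (⋃ n, E n) = 0 :=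
      measure_iUnion_null fun n => le_antisymm (h n) (by positivity)
    rw [hcover] at this
    simpa [Real.volume_univ] using this
  have hst : E n - E n ∈ nhds (0 : ℝ) :=
    MeasureTheory.Measure.sub_mem_nhds_zero_of_addHaar_pos volume (E n) (hEmeas n) hn
  obtain ⟨δ, hδ, hball⟩ := Metric.mem_nhds_iff.mp hst
  have hbdd : ∀ x : ℝ, |x| < δ → |d x| ≤ 2 * n := by
    intro x hx
    have : x ∈ E n - E n := hball (by simpa [Real.dist_eq] using hx)
    obtain ⟨a, ha, b, hb, hab⟩ := this
    have hdx : d x = d a - d b := by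
      have : d (a - b) = d a - d b := by
        have := hadd (a - b) b; rw [sub_add_cancel] at this; linarith
      rw [← hab]; exact this
    rw [hdx]
    calc |d a - d b| ≤ |d a| + |d b| := abs_sub _ _
      _ ≤ n + n := add_le_add ha hb
      _ = 2 * n := by ring
  -- continuity at 0
  have htendsto : Filter.Tendsto d (nhds 0) (nhds 0) := by
    rw [Metric.tendsto_nhds_nhds]
    intro ε hε
    obtain ⟨m, hm⟩ := exists_nat_gt (2 * n / ε)
    have hm0 : 0 < (m : ℝ) := lt_of_le_of_lt (div_nonneg (by positivity) hε.le) hm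
    refine ⟨δ / m, by positivity, fun x hx => ?_⟩
    simp only [Real.dist_eq, sub_zero] at hx ⊢
    have h1 : |(m : ℝ) * x| < δ := by
      rw [abs_mul, abs_of_pos hm0]
      calc (m : ℝ) * |x| < m * (δ / m) := by
            exact (mul_lt_mul_iff_right₀ hm0).mpr hx
        _ = δ := by field_simp
    have h2 : |d ((m : ℝ) * x)| ≤ 2 * n := hbdd _ h1
    rw [hnat, abs_mul, abs_of_pos hm0] at h2
    have : |d x| ≤ 2 * n / m := by
      rw [le_div_iff₀ hm0]; linarith [h2]
    calc |d x| ≤ 2 * n / m := this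
      _ < ε := by
        rw [div_lt_iff₀ hm0]
        nlinarith [(div_lt_iff₀ hε).mp hm]
  -- continuity everywhere
  have hcont : Continuous d := by
    rw [continuous_iff_continuousAt]
    intro x
    have key : ∀ y, d y = d x + d (y - x) := by
      intro y
      have := hadd x (y - x); rw [add_sub_cancel] at this; linarith
    unfold ContinuousAt
    have : Filter.Tendsto (fun y => d x + d (y - x)) (nhds x) (nhds (d x + 0)) := by
      refine Filter.Tendsto.const_add _ ?_
      exact htendsto.comp (by simpa using (continuous_sub_right x).tendsto' x 0 (by simp))
    rw [show d x + 0 = d x by ring] at this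
    exact this.congr fun y => (key y).symm
  -- linearity
  have hcd : Continuous (⇑f) := hcont
  set L := f.toRealLinearMap hcd with hLdef
  have hL : ∀ y, L y = d y := fun y => by
    rw [hLdef, AddMonoidHom.coe_toRealLinearMap]; exact hf y
  intro x
  have h := L.map_smul x 1
  simp only [hL, smul_eq_mul, mul_one] at h
  rw [h, d1, mul_zero]
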